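/- arXiv:2312.17023 — 4 statements merged into one kernel-verified Lean document; each statement's English description precedes it below -/
import Mathlib

section
/- (The lift is the Sierpiński cone.) Let A and C be dcpos, let c₀ : C, and let c₁ : A → C be Scott-continuous with c₀ ≤ c₁ a for all a : A. Then there exists a unique Scott-continuous map h : WithBot A → C with h ⊥ = c₀ and h ↑a = c₁ a for all a : A. -/
/-- A partial order is a dcpo when every nonempty directed subset has a least upper bound. -/
def IsDcpo (α : Type*) [PartialOrder α] : Prop :=
  ∀ S : Set α, S.Nonempty → DirectedOn (· ≤ ·) S → ∃ x, IsLUB S x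

/-- A map between partial orders is Scott-continuous when it is monotone and sends the least
upper bound of any nonempty directed subset to the least upper bound of its image. -/
def ScottCont {α β : Type*} [PartialOrder α] [PartialOrder β] (f : α → β) : Prop :=
  Monotone f ∧ ∀ S : Set α, S.Nonempty → DirectedOn (· ≤ ·) S →
    ∀ x, IsLUB S x → IsLUB (f '' S) (f x)

/-- the lift is the Sierpiński cone: given dcpos `A`, `C`, a point `c₀ : C`
and a Scott-continuous `c₁ : A → C` with `c₀ ≤ c₁ a` for all `a`, there is a unique
Scott-continuous map `h : WithBot A → C` with `h ⊥ = c₀` and `h ↑a = c₁ a`. -/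
theorem lift_is_sierpinski_cone {A C : Type*} [PartialOrder A] [PartialOrder C]
    (hA : IsDcpo A) (hC : IsDcpo C) (c₀ : C) (c₁ : A → C) (hc₁ : ScottCont c₁)
    (hle : ∀ a : A, c₀ ≤ c₁ a) :
    ∃! h : WithBot A → C, ScottCont h ∧ h ⊥ = c₀ ∧ ∀ a : A, h (a : WithBot A) = c₁ a := by
  classical
  set h : WithBot A → C := fun x => WithBot.recBotCoe c₀ c₁ x with hh
  have hmono : Monotone h := by
    intro x y hxy
    cases x with
    | bot =>
      cases y with
      | bot => exact le_rfl
      | coe a => exact hle a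
    | coe a =>
      cases y with
      | bot => exact absurd hxy (by simp)
      | coe b => exact hc₁.1 (WithBot.coe_le_coe.mp hxy)
  refine ⟨h, ⟨⟨hmono, ?_⟩, rfl, fun a => rfl⟩, ?_⟩
  · intro S hSne hSdir x hx
    by_cases hbot : ∃ a : A, (a : WithBot A) ∈ S
    · obtain ⟨a0, ha0⟩ := hbot
      set S' : Set A := {a | (a : WithBot A) ∈ S} with hS'
      have hS'ne : S'.Nonempty := ⟨a0, ha0⟩
      obtain ⟨b, rfl⟩ : ∃ b : A, x = (b : WithBot A) := by
        cases x with
        | bot =>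
          exact absurd (hx.1 ha0) (by simp)
        | coe b => exact ⟨b, rfl⟩
      have hbLUB : IsLUB S' b := by
        constructor
        · intro a ha
          exact WithBot.coe_le_coe.mp (hx.1 ha)
        · intro u hu
          have : (b : WithBot A) ≤ (u : WithBot A) := by
            apply hx.2
            intro s hs
            cases s with
            | bot => exact bot_le
            | coe a => exact WithBot.coe_le_coe.mpr (hu hs)
          exact WithBot.coe_le_coe.mp this
      have hS'dir : DirectedOn (· ≤ ·) S' := by
        intro a ha b' hb'
        obtain ⟨z, hz, hz1, hz2⟩ := hSdir _ ha _ hb'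
        cases z with
        | bot => exact absurd hz1 (by simp)
        | coe c => exact ⟨c, hz, WithBot.coe_le_coe.mp hz1, WithBot.coe_le_coe.mp hz2⟩
      have hclub : IsLUB (c₁ '' S') (c₁ b) := hc₁.2 S' hS'ne hS'dir b hbLUB
      constructor
      · rintro y ⟨s, hs, rfl⟩
        cases s with
        | bot => exact le_trans (hle a0) (hclub.1 ⟨a0, ha0, rfl⟩)
        | coe a => exact hclub.1 ⟨a, hs, rfl⟩
      · intro u hu
        apply hclub.2
        rintro y ⟨a, ha, rfl⟩
        exact hu ⟨(a : WithBot A), ha, rfl⟩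
    · push_neg at hbot
      have hSsub : S = {⊥} := by
        apply Set.eq_singleton_iff_nonempty_unique_mem.mpr
        refine ⟨hSne, fun s hs => ?_⟩
        cases s with
        | bot => rfl
        | coe a => exact absurd hs (hbot a)
      subst hSsub
      have hxbot : x = ⊥ := le_antisymm (hx.2 (by rintro s rfl; exact le_rfl)) bot_le
      subst hxbot
      simp only [Set.image_singleton]
      exact isLUB_singleton
  · rintro g ⟨hg, hg0, hg1⟩
    funext x
    cases x with
    | bot => exact hg0
    | coe a => exact hg1 a
end

section
/- (The lift classifies partial maps.) Let A and B be dcpos. The assignment sending a Scott-continuous map f : A → WithBot B to the pair (U_f, e_f), where U_f = {x : A | f x ≠ ⊥} and e_f : U_f → B is the corestriction of f (with U_f carrying the order induced from A), is a bijection from the set of Scott-continuous maps A → WithBot B onto the set of pairs (U, e) in which U ⊆ A is Scott-open and e : U → B is Scott-continuous. -/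
/-- A subset of a dcpo is Scott-open when it is an upper set that is inaccessible by
directed suprema. -/
def ScottOpen {α : Type*} [PartialOrder α] (U : Set α) : Prop :=
  IsUpperSet U ∧ ∀ S : Set α, S.Nonempty → DirectedOn (· ≤ ·) S →
    ∀ x, IsLUB S x → x ∈ U → ∃ s ∈ S, s ∈ U

/-- The assignment sending `f : A → WithBot B` to the partial map it represents: the
domain of definition `U_f = {x | f x ≠ ⊥}` together with the corestriction `e_f : U_f → B`. -/
noncomputable def toPartialMap {A B : Type*} (f : A → WithBot B) :
    Σ U : Set A, (U → B) :=
  ⟨{x : A | f x ≠ ⊥}, fun x => (f x.1).unbot x.2⟩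

open Classical in
/-- Inverse assignment. -/
noncomputable def ofPartialMap {A B : Type*} (p : Σ U : Set A, (U → B)) : A → WithBot B :=
  fun x => if h : x ∈ p.1 then (p.2 ⟨x, h⟩ : WithBot B) else ⊥

lemma ofPartialMap_pos {A B : Type*} (p : Σ U : Set A, (U → B)) {x : A} (h : x ∈ p.1) :
    ofPartialMap p x = (p.2 ⟨x, h⟩ : WithBot B) := by
  unfold ofPartialMap; exact dif_pos h

lemma ofPartialMap_neg {A B : Type*} (p : Σ U : Set A, (U → B)) {x : A} (h : x ∉ p.1) :
    ofPartialMap p x = ⊥ := by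
  unfold ofPartialMap; exact dif_neg h

lemma ofPartialMap_toPartialMap {A B : Type*} (f : A → WithBot B) :
    ofPartialMap (toPartialMap f) = f := by
  funext x
  by_cases h : f x = ⊥
  · rw [ofPartialMap_neg _ (not_not_intro h), h]
  · rw [ofPartialMap_pos (toPartialMap f) (h : x ∈ (toPartialMap f).1)]
    exact WithBot.coe_unbot _ _

lemma lub_of_coe_lub {B : Type*} [PartialOrder B] {T : Set B} {b : B}
    (h : IsLUB ((fun x : B => (x : WithBot B)) '' T) (b : WithBot B)) : IsLUB T b := by
  constructor
  · intro t ht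
    exact WithBot.coe_le_coe.1 (h.1 ⟨t, ht, rfl⟩)
  · intro c hc
    refine WithBot.coe_le_coe.1 (h.2 ?_)
    rintro _ ⟨t, ht, rfl⟩
    exact WithBot.coe_le_coe.2 (hc ht)

lemma sigma_mk_eq {A B : Type*} {U V : Set A} (e : U → B) (e' : V → B)
    (h : U = V) (h2 : ∀ x (hx : x ∈ U) (hx' : x ∈ V), e ⟨x, hx⟩ = e' ⟨x, hx'⟩) :
    (⟨U, e⟩ : Σ W : Set A, (W → B)) = ⟨V, e'⟩ := by
  subst h
  exact congrArg (Sigma.mk U) (funext fun x => h2 x.1 x.2 x.2)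

/-- the lift classifies partial maps: the assignment `f ↦ (U_f, e_f)` is a
bijection from Scott-continuous maps `A → WithBot B` onto pairs `(U, e)` with `U ⊆ A`
Scott-open and `e : U → B` Scott-continuous (where `U` carries the induced order). -/
theorem lift_classifies_partial_maps {A B : Type*} [PartialOrder A] [PartialOrder B]
    (hA : IsDcpo A) (hB : IsDcpo B) :
    Set.BijOn (toPartialMap (A := A) (B := B))
      {f : A → WithBot B | ScottCont f}
      {p : Σ U : Set A, (U → B) | ScottOpen p.1 ∧ ScottCont p.2} := by
  refine ⟨?_, ?_, ?_⟩
  · -- MapsTo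
    intro f hf
    obtain ⟨hmono, hlub⟩ := hf
    simp only [Set.mem_setOf_eq, toPartialMap]
    constructor
    · -- Scott open
      constructor
      · intro x y hxy hx hy
        exact hx (le_bot_iff.1 (hy ▸ hmono hxy))
      · intro S hS hdir x hx hxU
        by_contra h
        push_neg at h
        apply hxU
        have hfx := hlub S hS hdir x hx
        refine le_bot_iff.1 (hfx.2 ?_)
        rintro _ ⟨s, hs, rfl⟩
        exact (not_not.1 (h s hs)).le
    · -- corestriction is Scott continuous
      constructor
      · intro u v huv
        have h1 : f u.1 ≤ f v.1 := hmono huv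
        rw [← WithBot.coe_le_coe, WithBot.coe_unbot, WithBot.coe_unbot]
        exact h1
      · intro S hS hdir x hlubx
        have hSval : (Subtype.val '' S).Nonempty := hS.image _
        have hdirval : DirectedOn (· ≤ ·) (Subtype.val '' S) := by
          rintro _ ⟨a, ha, rfl⟩ _ ⟨b, hb, rfl⟩
          obtain ⟨c, hc, h1, h2⟩ := hdir a ha b hb
          exact ⟨c.1, ⟨c, hc, rfl⟩, h1, h2⟩
        obtain ⟨y, hy⟩ := hA _ hSval hdirval
        have hfy := hlub _ hSval hdirval y hy
        have hyU : f y ≠ ⊥ := by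
          obtain ⟨s, hs⟩ := hS
          intro hbot
          have h2 := hfy.1 ⟨s.1, ⟨s, hs, rfl⟩, rfl⟩
          rw [hbot] at h2
          exact s.2 (le_bot_iff.1 h2)
        have hxy : x.1 = y := by
          apply le_antisymm
          · have hub : ∀ s ∈ S, s ≤ (⟨y, hyU⟩ : {x : A | f x ≠ ⊥}) := fun s hs =>
              Subtype.coe_le_coe.1 (hy.1 ⟨s, hs, rfl⟩)
            exact Subtype.coe_le_coe.2 (hlubx.2 hub)
          · exact hy.2 (by rintro _ ⟨s, hs, rfl⟩; exact hlubx.1 hs)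
        rw [← hxy] at hfy
        have himg : f '' (Subtype.val '' S)
            = (fun b : B => (b : WithBot B)) ''
              ((fun u : {x : A | f x ≠ ⊥} => (f u.1).unbot u.2) '' S) := by
          ext z
          constructor
          · rintro ⟨_, ⟨s, hs, rfl⟩, rfl⟩
            exact ⟨(f s.1).unbot s.2, ⟨s, hs, rfl⟩, WithBot.coe_unbot _ _⟩
          · rintro ⟨_, ⟨s, hs, rfl⟩, rfl⟩
            exact ⟨s.1, ⟨s, hs, rfl⟩, (WithBot.coe_unbot _ _).symm⟩
        rw [himg, ← WithBot.coe_unbot (f x.1) x.2] at hfy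
        exact lub_of_coe_lub hfy
  · -- InjOn
    intro f _ g _ h
    rw [← ofPartialMap_toPartialMap f, ← ofPartialMap_toPartialMap g, h]
  · -- SurjOn
    rintro ⟨U, e⟩ ⟨⟨hUup, hUacc⟩, hemono, helub⟩
    refine ⟨ofPartialMap ⟨U, e⟩, ?_, ?_⟩
    · -- Scott continuity of ofPartialMap
      constructor
      · intro x y hxy
        by_cases hx : x ∈ U
        · have hy := hUup hxy hx
          rw [ofPartialMap_pos ⟨U, e⟩ hx, ofPartialMap_pos ⟨U, e⟩ hy]
          exact WithBot.coe_le_coe.2 (hemono (show (⟨x, hx⟩ : U) ≤ ⟨y, hy⟩ from hxy))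
        · rw [ofPartialMap_neg ⟨U, e⟩ hx]
          exact bot_le
      · intro S hS hdir x hx
        by_cases hxU : x ∈ U
        · obtain ⟨s₀, hs₀S, hs₀U⟩ := hUacc S hS hdir x hx hxU
          set S' := S ∩ U with hS'def
          have hS' : S'.Nonempty := ⟨s₀, hs₀S, hs₀U⟩
          have hdir' : DirectedOn (· ≤ ·) S' := by
            rintro a ⟨haS, haU⟩ b ⟨hbS, hbU⟩
            obtain ⟨c, hcS, hac, hbc⟩ := hdir a haS b hbS
            exact ⟨c, ⟨hcS, hUup hac haU⟩, hac, hbc⟩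
          have hx' : IsLUB S' x := by
            constructor
            · exact fun s hs => hx.1 hs.1
            · intro z hz
              refine hx.2 fun s hsS => ?_
              obtain ⟨c, hcS, h1, h2⟩ := hdir s hsS s₀ hs₀S
              exact le_trans h1 (hz ⟨hcS, hUup h2 hs₀U⟩)
          set T : Set U := Subtype.val ⁻¹' S' with hTdef
          have hTne : T.Nonempty := ⟨⟨s₀, hs₀U⟩, hs₀S, hs₀U⟩
          have hTdir : DirectedOn (· ≤ ·) T := by
            rintro a ha b hb
            obtain ⟨c, hc, hac, hbc⟩ := hdir' a.1 ha b.1 hb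
            exact ⟨⟨c, hc.2⟩, hc, hac, hbc⟩
          have hTlub : IsLUB T ⟨x, hxU⟩ := by
            constructor
            · exact fun u hu => Subtype.coe_le_coe.1 (hx.1 hu.1)
            · intro z hz
              refine Subtype.coe_le_coe.1 (hx'.2 fun s hs => ?_)
              exact hz (show (⟨s, hs.2⟩ : U) ∈ T from hs)
          have he := helub T hTne hTdir ⟨x, hxU⟩ hTlub
          rw [ofPartialMap_pos ⟨U, e⟩ hxU]
          constructor
          · rintro _ ⟨s, hsS, rfl⟩
            by_cases hsU : s ∈ U
            · rw [ofPartialMap_pos ⟨U, e⟩ hsU]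
              exact WithBot.coe_le_coe.2 (he.1 ⟨⟨s, hsU⟩, ⟨hsS, hsU⟩, rfl⟩)
            · rw [ofPartialMap_neg ⟨U, e⟩ hsU]
              exact bot_le
          · intro z hz
            have h0 : (e ⟨s₀, hs₀U⟩ : WithBot B) ≤ z := by
              have h1 := hz ⟨s₀, hs₀S, rfl⟩
              rwa [ofPartialMap_pos ⟨U, e⟩ hs₀U] at h1
            obtain ⟨c, rfl, -⟩ := WithBot.coe_le_iff.1 h0
            refine WithBot.coe_le_coe.2 (he.2 ?_)
            rintro _ ⟨u, hu, rfl⟩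
            have h1 := hz ⟨u.1, hu.1, rfl⟩
            rw [ofPartialMap_pos ⟨U, e⟩ hu.2] at h1
            exact WithBot.coe_le_coe.1 h1
        · have hall : ∀ s ∈ S, s ∉ U := fun s hs hsU => hxU (hUup (hx.1 hs) hsU)
          rw [ofPartialMap_neg ⟨U, e⟩ hxU]
          constructor
          · rintro _ ⟨s, hsS, rfl⟩
            rw [ofPartialMap_neg ⟨U, e⟩ (hall s hsS)]
          · intro z _
            exact bot_le
    · -- toPartialMap ∘ ofPartialMap = id
      apply sigma_mk_eq
      · ext x
        by_cases h : x ∈ U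
        · simp only [toPartialMap, Set.mem_setOf_eq, ofPartialMap_pos ⟨U, e⟩ h]
          simp [h]
        · simp only [toPartialMap, Set.mem_setOf_eq, ofPartialMap_neg ⟨U, e⟩ h]
          simp [h]
      · intro x hx hx'
        exact WithBot.coe_injective (by
          rw [WithBot.coe_unbot, ofPartialMap_pos ⟨U, e⟩ hx'])
end

section
/- (The lifting functor is conservative.) Let A and B be dcpos and f : A → B a Scott-continuous map. If the lifted map WithBot.map f : WithBot A → WithBot B (sending ⊥ to ⊥ and ↑a to ↑(f a)) is the underlying map of an order isomorphism WithBot A ≃o WithBot B, then f itself is an order isomorphism A ≃o B. -/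
/-- the lifting functor is conservative: if the lifted map
`WithBot.map f : WithBot A → WithBot B` of a Scott-continuous map `f : A → B` of dcpos
underlies an order isomorphism, then `f` underlies an order isomorphism `A ≃o B`. -/
theorem lifting_conservative {A B : Type*} [PartialOrder A] [PartialOrder B]
    (hA : IsDcpo A) (hB : IsDcpo B) (f : A → B) (hf : ScottCont f)
    (e : WithBot A ≃o WithBot B) (he : ⇑e = WithBot.map f) :
    ∃ e' : A ≃o B, ⇑e' = f := by
  have hcoe : ∀ a : A, e a = (f a : WithBot B) := by
    intro a; rw [he]; rfl
  have hbij : Function.Bijective f := by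
    constructor
    · intro a a' h
      have : e a = e a' := by rw [hcoe, hcoe, h]
      exact WithBot.coe_injective (e.injective this)
    · intro b
      obtain ⟨x, hx⟩ := e.surjective (b : WithBot B)
      cases x with
      | bot =>
        rw [he] at hx
        simp at hx
      | coe a =>
        rw [hcoe] at hx
        exact ⟨a, WithBot.coe_injective hx⟩
  refine ⟨{ toEquiv := Equiv.ofBijective f hbij, map_rel_iff' := ?_ }, rfl⟩
  intro a a'
  simp only [Equiv.ofBijective_apply]
  rw [← WithBot.coe_le_coe (a := f a), ← hcoe, ← hcoe, e.le_iff_le, WithBot.coe_le_coe]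
end

section
/- (The commutator is the universal bistrict map: L A ⊗ L B ≅ L(A × B).) Let A and B be dcpos and C a pointed dcpo. For every Scott-continuous map f : WithBot A × WithBot B → C (product order) that is bistrict, i.e. f(⊥, v) = ⊥ and f(u, ⊥) = ⊥ for all u : WithBot A, v : WithBot B, there exists a unique strict Scott-continuous map g : WithBot (A × B) → C with f(u, v) = g(κ(u, v)) for all u, v. -/
/-- The commutator `κ : WithBot A × WithBot B → WithBot (A × B)`: it sends `(↑a, ↑b)` to
`↑(a, b)` and any pair with a `⊥` component to `⊥`. -/
def kappa {A B : Type*} (p : WithBot A × WithBot B) : WithBot (A × B) :=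
  WithBot.recBotCoe ⊥ (fun a => WithBot.map (fun b => (a, b)) p.2) p.1

/-- the commutator is the universal bistrict map, `L A ⊗ L B ≅ L (A × B)`:
for dcpos `A`, `B` and a pointed dcpo `C`, every bistrict Scott-continuous map
`f : WithBot A × WithBot B → C` factors through `κ` by a unique strict Scott-continuous
map `g : WithBot (A × B) → C`. -/
theorem commutator_universal_bistrict {A B C : Type*} [PartialOrder A] [PartialOrder B]
    [PartialOrder C] [OrderBot C] (hA : IsDcpo A) (hB : IsDcpo B) (hC : IsDcpo C)
    (f : WithBot A × WithBot B → C) (hf : ScottCont f)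
    (hbot₁ : ∀ v : WithBot B, f (⊥, v) = ⊥) (hbot₂ : ∀ u : WithBot A, f (u, ⊥) = ⊥) :
    ∃! g : WithBot (A × B) → C, ScottCont g ∧ g ⊥ = ⊥ ∧
      ∀ (u : WithBot A) (v : WithBot B), f (u, v) = g (kappa (u, v)) := by

  classical
  set σ : WithBot (A × B) → WithBot A × WithBot B :=
    (fun w => (WithBot.map Prod.fst w, WithBot.map Prod.snd w)) with hσdef
  have hσbot : σ ⊥ = (⊥, ⊥) := rfl
  have hσcoe : ∀ p : A × B, σ (↑p) = (↑p.1, ↑p.2) := fun p => rfl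
  have hσmono : Monotone σ := by
    intro w w' h
    induction w using WithBot.recBotCoe with
    | bot => exact ⟨bot_le, bot_le⟩
    | coe p =>
      induction w' using WithBot.recBotCoe with
      | bot => exact absurd h (by simp)
      | coe q =>
        rw [WithBot.coe_le_coe] at h
        exact ⟨WithBot.coe_le_coe.2 h.1, WithBot.coe_le_coe.2 h.2⟩
  have hσscott : ScottCont σ := by
    refine ⟨hσmono, ?_⟩
    intro S hne hdir x hx
    induction x using WithBot.recBotCoe with
    | bot =>
      have hS : S = {⊥} := by
        apply Set.eq_singleton_iff_nonempty_unique_mem.2 ⟨hne, ?_⟩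
        intro w hw
        exact le_bot_iff.1 (hx.1 hw)
      rw [hS, Set.image_singleton]
      exact isLUB_singleton
    | coe p =>
      constructor
      · rintro y ⟨w, hw, rfl⟩
        exact hσmono (hx.1 hw)
      · intro y hy
        -- first find a non-bot element of S
        have hex : ∃ q : A × B, (↑q : WithBot (A × B)) ∈ S := by
          by_contra hemp
          push_neg at hemp
          have hub : (⊥ : WithBot (A × B)) ∈ upperBounds S := by
            intro w hw
            induction w using WithBot.recBotCoe with
            | bot => exact le_rfl
            | coe q => exact absurd hw (hemp q)
          exact absurd (le_bot_iff.1 (hx.2 hub)) (by simp)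
        obtain ⟨q0, hq0⟩ := hex
        have h0 : ((↑q0.1 : WithBot A), (↑q0.2 : WithBot B)) ≤ y :=
          hy ⟨↑q0, hq0, rfl⟩
        obtain ⟨a', ha', haa'⟩ := WithBot.coe_le_iff.1 h0.1
        obtain ⟨b', hb', hbb'⟩ := WithBot.coe_le_iff.1 h0.2
        have hub : (↑(a', b') : WithBot (A × B)) ∈ upperBounds S := by
          intro w hw
          induction w using WithBot.recBotCoe with
          | bot => exact bot_le
          | coe q =>
            have hq : ((↑q.1 : WithBot A), (↑q.2 : WithBot B)) ≤ y :=
              hy ⟨↑q, hw, rfl⟩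
            have hq1 := hq.1
            have hq2 := hq.2
            rw [ha'] at hq1
            rw [hb'] at hq2
            exact WithBot.coe_le_coe.2
              ⟨WithBot.coe_le_coe.1 hq1, WithBot.coe_le_coe.1 hq2⟩
        have hple : p ≤ (a', b') := WithBot.coe_le_coe.1 (hx.2 hub)
        rw [hσcoe]
        refine ⟨?_, ?_⟩
        · rw [ha']; exact WithBot.coe_le_coe.2 hple.1
        · rw [hb']; exact WithBot.coe_le_coe.2 hple.2
  refine ⟨f ∘ σ, ⟨⟨(hf.1).comp hσmono, ?_⟩, ?_, ?_⟩, ?_⟩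
  · intro S hne hdir x hx
    have hne' : (σ '' S).Nonempty := hne.image σ
    have hdir' : DirectedOn (· ≤ ·) (σ '' S) := by
      rintro a ⟨w, hw, rfl⟩ b ⟨w', hw', rfl⟩
      obtain ⟨z, hz, hwz, hw'z⟩ := hdir w hw w' hw'
      exact ⟨σ z, ⟨z, hz, rfl⟩, hσmono hwz, hσmono hw'z⟩
    have h1 : IsLUB (σ '' S) (σ x) := hσscott.2 S hne hdir x hx
    have h2 := hf.2 (σ '' S) hne' hdir' (σ x) h1
    rwa [Set.image_image] at h2
  · show f (σ ⊥) = ⊥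
    rw [hσbot]; exact hbot₁ ⊥
  · intro u v
    induction u using WithBot.recBotCoe with
    | bot =>
      show f (⊥, v) = f (σ ⊥)
      rw [hσbot, hbot₁, hbot₁]
    | coe a =>
      induction v using WithBot.recBotCoe with
      | bot =>
        show f (↑a, ⊥) = f (σ ⊥)
        rw [hσbot, hbot₂, hbot₁]
      | coe b => rfl
  · rintro g ⟨hgs, hgbot, hfac⟩
    funext w
    induction w using WithBot.recBotCoe with
    | bot => rw [hgbot]; show (⊥ : C) = f (σ ⊥); rw [hσbot, hbot₁]
    | coe q =>
      have := hfac (↑q.1) (↑q.2)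
      have hk : kappa ((↑q.1 : WithBot A), (↑q.2 : WithBot B)) = ↑q := rfl
      rw [hk] at this
      exact this.symm
end
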